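/- Let n ≥ 1, λ > 0, let k_1, …, k_n ∈ ℝ^m and l_1, …, l_n ∈ ℝ^p. Define Σ̂₁ = (1/n) ∑_i k_i k_iᵀ, Σ̂₂ = (1/n) ∑_i l_i l_iᵀ, the cross-covariance Σ̂₁₂ = (1/n) ∑_i k_i l_iᵀ (an m×p matrix), and the Gram matrices G, L with G_{ij} = ⟨k_i, k_j⟩ and L_{ij} = ⟨l_i, l_j⟩. Then Tr( (Σ̂₁ + λI)⁻¹ Σ̂₁₂ (Σ̂₂ + λI)⁻¹ Σ̂₁₂ᵀ ) = Tr( G (G + nλI)⁻¹ L (L + nλI)⁻¹ ). -/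

import Mathlib

open Matrix
open scoped RealInnerProductSpace

-- pos def of M + c•1 for PSD M
lemma aux_posDef {q : ℕ} {M : Matrix (Fin q) (Fin q) ℝ} (hM : M.PosSemidef)
    {c : ℝ} (hc : 0 < c) : (M + c • 1).PosDef := by
  have h1 : (c • (1 : Matrix (Fin q) (Fin q) ℝ)).PosDef := by
    have : c • (1 : Matrix (Fin q) (Fin q) ℝ) = Matrix.diagonal (fun _ => c) := by
      ext i j; by_cases h : i = j <;> simp [Matrix.diagonal, h, Matrix.one_apply]
    rw [this]
    exact Matrix.posDef_diagonal_iff.mpr fun _ => hc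
  exact Matrix.PosDef.posSemidef_add hM h1

lemma aux_isUnit {q : ℕ} {M : Matrix (Fin q) (Fin q) ℝ} (hM : M.PosSemidef)
    {c : ℝ} (hc : 0 < c) : IsUnit (M + c • 1).det :=
  (aux_posDef hM hc).det_pos.ne'.isUnit

-- push lemma
lemma aux_push {a b : ℕ} (A : Matrix (Fin a) (Fin b) ℝ) {c : ℝ} (hc : 0 < c) :
    Aᵀ * (A * Aᵀ + c • 1)⁻¹ = (Aᵀ * A + c • 1)⁻¹ * Aᵀ := by
  have hAAt : (A * Aᵀ).PosSemidef := by
    have := Matrix.posSemidef_self_mul_conjTranspose A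
    rwa [Matrix.conjTranspose_eq_transpose_of_trivial] at this
  have hAtA : (Aᵀ * A).PosSemidef := by
    have := Matrix.posSemidef_conjTranspose_mul_self A
    rwa [Matrix.conjTranspose_eq_transpose_of_trivial] at this
  have h1 := aux_isUnit hAAt hc
  have h2 := aux_isUnit hAtA hc
  have key : (Aᵀ * A + c • 1) * Aᵀ = Aᵀ * (A * Aᵀ + c • 1) := by
    simp only [Matrix.add_mul, Matrix.mul_add, Matrix.smul_mul, Matrix.mul_smul,
      Matrix.one_mul, Matrix.mul_one, Matrix.mul_assoc]
  calc Aᵀ * (A * Aᵀ + c • 1)⁻¹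
      = (Aᵀ * A + c • 1)⁻¹ * ((Aᵀ * A + c • 1) * Aᵀ) * (A * Aᵀ + c • 1)⁻¹ := by
        rw [← Matrix.mul_assoc (Aᵀ * A + c • 1)⁻¹,
          Matrix.nonsing_inv_mul _ h2, Matrix.one_mul]
    _ = (Aᵀ * A + c • 1)⁻¹ * Aᵀ * ((A * Aᵀ + c • 1) * (A * Aᵀ + c • 1)⁻¹) := by
        rw [key]; simp only [Matrix.mul_assoc]
    _ = (Aᵀ * A + c • 1)⁻¹ * Aᵀ := by
        rw [Matrix.mul_nonsing_inv _ h1, Matrix.mul_one]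

-- commute with resolvent
lemma aux_comm {q : ℕ} (M : Matrix (Fin q) (Fin q) ℝ) {c : ℝ}
    (h : IsUnit (M + c • 1).det) : M * (M + c • 1)⁻¹ = (M + c • 1)⁻¹ * M := by
  have e1 : M * (M + c • 1)⁻¹ = (M + c • 1) * (M + c • 1)⁻¹ - c • (M + c • 1)⁻¹ := by
    rw [Matrix.add_mul, Matrix.smul_mul, Matrix.one_mul]; abel
  have e2 : (M + c • 1)⁻¹ * M = (M + c • 1)⁻¹ * (M + c • 1) - c • (M + c • 1)⁻¹ := by
    rw [Matrix.mul_add, Matrix.mul_smul, Matrix.mul_one]; abel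
  rw [e1, e2, Matrix.mul_nonsing_inv _ h, Matrix.nonsing_inv_mul _ h]

theorem stmt_11 {n m p : ℕ} (hn : 1 ≤ n) (lam : ℝ) (hlam : 0 < lam)
    (k : Fin n → EuclideanSpace ℝ (Fin m)) (l : Fin n → EuclideanSpace ℝ (Fin p))
    (S1 : Matrix (Fin m) (Fin m) ℝ)
    (hS1 : S1 = (n : ℝ)⁻¹ • ∑ i, vecMulVec (fun a => k i a) (fun a => k i a))
    (S2 : Matrix (Fin p) (Fin p) ℝ)
    (hS2 : S2 = (n : ℝ)⁻¹ • ∑ i, vecMulVec (fun a => l i a) (fun a => l i a))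
    (S12 : Matrix (Fin m) (Fin p) ℝ)
    (hS12 : S12 = (n : ℝ)⁻¹ • ∑ i, vecMulVec (fun a => k i a) (fun a => l i a))
    (G : Matrix (Fin n) (Fin n) ℝ) (hG : ∀ i j, G i j = ⟪k i, k j⟫)
    (L : Matrix (Fin n) (Fin n) ℝ) (hL : ∀ i j, L i j = ⟪l i, l j⟫) :
    ((S1 + lam • 1)⁻¹ * S12 * (S2 + lam • 1)⁻¹ * S12ᵀ).trace =
      (G * (G + (n * lam) • 1)⁻¹ * L * (L + (n * lam) • 1)⁻¹).trace := by
  have hnR : (n : ℝ) ≠ 0 := Nat.cast_ne_zero.mpr (by omega)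
  set c : ℝ := (n : ℝ) * lam with hc_def
  have hc : 0 < c := mul_pos (by positivity) hlam
  set A : Matrix (Fin m) (Fin n) ℝ := Matrix.of fun a i => k i a with hA_def
  set B : Matrix (Fin p) (Fin n) ℝ := Matrix.of fun a i => l i a with hB_def
  -- basic rewrites
  have hAA : (∑ i, vecMulVec (fun a => k i a) (fun a => k i a)) = A * Aᵀ := by
    ext a b
    simp [Matrix.sum_apply, Matrix.mul_apply, Matrix.vecMulVec_apply, hA_def]
  have hBB : (∑ i, vecMulVec (fun a => l i a) (fun a => l i a)) = B * Bᵀ := by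
    ext a b
    simp [Matrix.sum_apply, Matrix.mul_apply, Matrix.vecMulVec_apply, hB_def]
  have hAB : (∑ i, vecMulVec (fun a => k i a) (fun a => l i a)) = A * Bᵀ := by
    ext a b
    simp [Matrix.sum_apply, Matrix.mul_apply, Matrix.vecMulVec_apply, hA_def, hB_def]
  have hG' : G = Aᵀ * A := by
    ext i j
    simp [hG, Matrix.mul_apply, PiLp.inner_apply, hA_def]
    exact Finset.sum_congr rfl fun _ _ => mul_comm _ _
  have hL' : L = Bᵀ * B := by
    ext i j
    simp [hL, Matrix.mul_apply, PiLp.inner_apply, hB_def]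
    exact Finset.sum_congr rfl fun _ _ => mul_comm _ _
  -- PSD facts
  have hAAt : (A * Aᵀ).PosSemidef := by
    have := Matrix.posSemidef_self_mul_conjTranspose A
    rwa [Matrix.conjTranspose_eq_transpose_of_trivial] at this
  have hAtA : (Aᵀ * A).PosSemidef := by
    have := Matrix.posSemidef_conjTranspose_mul_self A
    rwa [Matrix.conjTranspose_eq_transpose_of_trivial] at this
  have hBBt : (B * Bᵀ).PosSemidef := by
    have := Matrix.posSemidef_self_mul_conjTranspose B
    rwa [Matrix.conjTranspose_eq_transpose_of_trivial] at this
  have hBtB : (Bᵀ * B).PosSemidef := by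
    have := Matrix.posSemidef_conjTranspose_mul_self B
    rwa [Matrix.conjTranspose_eq_transpose_of_trivial] at this
  have hu1 : IsUnit (A * Aᵀ + c • 1).det := aux_isUnit hAAt hc
  have hu2 : IsUnit (B * Bᵀ + c • 1).det := aux_isUnit hBBt hc
  have hu3 : IsUnit (Aᵀ * A + c • 1).det := aux_isUnit hAtA hc
  have hu4 : IsUnit (Bᵀ * B + c • 1).det := aux_isUnit hBtB hc
  -- smul decompositions
  haveI : Invertible ((n : ℝ)⁻¹) := invertibleOfNonzero (inv_ne_zero hnR)
  have smul1 : S1 + lam • 1 = (n : ℝ)⁻¹ • (A * Aᵀ + c • 1) := by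
    rw [hS1, hAA, smul_add, smul_smul, hc_def]
    congr 1
    rw [inv_mul_cancel_left₀ hnR]
  have smul2 : S2 + lam • 1 = (n : ℝ)⁻¹ • (B * Bᵀ + c • 1) := by
    rw [hS2, hBB, smul_add, smul_smul, hc_def]
    congr 1
    rw [inv_mul_cancel_left₀ hnR]
  have inv1 : (S1 + lam • 1)⁻¹ = (n : ℝ) • (A * Aᵀ + c • 1)⁻¹ := by
    rw [smul1, Matrix.inv_smul _ _ hu1, invOf_eq_inv, inv_inv]
  have inv2 : (S2 + lam • 1)⁻¹ = (n : ℝ) • (B * Bᵀ + c • 1)⁻¹ := by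
    rw [smul2, Matrix.inv_smul _ _ hu2, invOf_eq_inv, inv_inv]
  have hS12' : S12 = (n : ℝ)⁻¹ • (A * Bᵀ) := by rw [hS12, hAB]
  have hS12t : S12ᵀ = (n : ℝ)⁻¹ • (B * Aᵀ) := by
    rw [hS12', Matrix.transpose_smul, Matrix.transpose_mul, Matrix.transpose_transpose]
  set P : Matrix (Fin m) (Fin m) ℝ := (A * Aᵀ + c • 1)⁻¹ with hP
  set Q : Matrix (Fin p) (Fin p) ℝ := (B * Bᵀ + c • 1)⁻¹ with hQ
  set P' : Matrix (Fin n) (Fin n) ℝ := (Aᵀ * A + c • 1)⁻¹ with hP'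
  set Q' : Matrix (Fin n) (Fin n) ℝ := (Bᵀ * B + c • 1)⁻¹ with hQ'
  -- reduce LHS matrix
  have lhsmat : (S1 + lam • 1)⁻¹ * S12 * (S2 + lam • 1)⁻¹ * S12ᵀ
      = P * (A * Bᵀ) * Q * (B * Aᵀ) := by
    rw [inv1, inv2, hS12t, hS12']
    simp only [Matrix.smul_mul, Matrix.mul_smul, smul_smul]
    rw [show (n : ℝ)⁻¹ * ((n : ℝ) * ((n : ℝ)⁻¹ * (n : ℝ))) = 1 by field_simp, one_smul]
  have push1 : Aᵀ * P = P' * Aᵀ := aux_push A hc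
  have push2 : Bᵀ * Q = Q' * Bᵀ := aux_push B hc
  have key : Aᵀ * (P * (A * Bᵀ) * Q * B) = P' * G * Q' * L := by
    calc Aᵀ * (P * (A * Bᵀ) * Q * B)
        = (Aᵀ * P) * A * ((Bᵀ * Q) * B) := by simp only [Matrix.mul_assoc]
      _ = (P' * Aᵀ) * A * ((Q' * Bᵀ) * B) := by rw [push1, push2]
      _ = P' * (Aᵀ * A) * (Q' * (Bᵀ * B)) := by simp only [Matrix.mul_assoc]
      _ = P' * G * Q' * L := by rw [← hG', ← hL']; simp only [Matrix.mul_assoc]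
  have comm1 : G * P' = P' * G := by rw [hG']; exact aux_comm _ hu3
  have comm2 : L * Q' = Q' * L := by rw [hL']; exact aux_comm _ hu4
  calc ((S1 + lam • 1)⁻¹ * S12 * (S2 + lam • 1)⁻¹ * S12ᵀ).trace
      = (P * (A * Bᵀ) * Q * (B * Aᵀ)).trace := by rw [lhsmat]
    _ = ((P * (A * Bᵀ) * Q * B) * Aᵀ).trace := by simp only [Matrix.mul_assoc]
    _ = (Aᵀ * (P * (A * Bᵀ) * Q * B)).trace := Matrix.trace_mul_comm _ _
    _ = (P' * G * Q' * L).trace := by rw [key]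
    _ = (G * P' * L * Q').trace := by
        rw [show G * P' * L * Q' = P' * G * (L * Q') by
          rw [comm1]; simp only [Matrix.mul_assoc], comm2, ← Matrix.mul_assoc]
    _ = (G * (G + (↑n * lam) • 1)⁻¹ * L * (L + (↑n * lam) • 1)⁻¹).trace := by
        simp only [hP', hQ', ← hG', ← hL', hc_def]
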